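/- For every even n ≥ 10 with n ≡ 2 (mod 4), the element η = 1 + ζ_{2n} + ζ_{2n}^{(n+2)/4} + ζ_{2n}^{(3n+2)/4} of ℤ[ζ_{2n}] satisfies η·conj(η) = 4 + ζ_{2n} + conj(ζ_{2n}) = 4 + 2cos(π/n). -/

import Mathlib

open Complex

/-- For even `n ≥ 10` with `n ≡ 2 (mod 4)`,
`η = 1 + ζ_{2n} + ζ_{2n}^{(n+2)/4} + ζ_{2n}^{(3n+2)/4}` satisfies
`η * conj η = 4 + ζ_{2n} + conj ζ_{2n} = 4 + 2cos(π/n)`. -/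
theorem stmt14 (n : ℕ) (hn : 10 ≤ n) (hmod : n % 4 = 2)
    (ζ : ℂ) (hζ : ζ = Complex.exp (Real.pi * Complex.I / n)) :
    (1 + ζ + ζ ^ ((n + 2) / 4) + ζ ^ ((3 * n + 2) / 4)) *
        (starRingEnd ℂ) (1 + ζ + ζ ^ ((n + 2) / 4) + ζ ^ ((3 * n + 2) / 4))
      = 4 + ζ + (starRingEnd ℂ) ζ ∧
    (1 + ζ + ζ ^ ((n + 2) / 4) + ζ ^ ((3 * n + 2) / 4)) *
        (starRingEnd ℂ) (1 + ζ + ζ ^ ((n + 2) / 4) + ζ ^ ((3 * n + 2) / 4))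
      = 4 + 2 * (Real.cos (Real.pi / n) : ℝ) := by
  obtain ⟨k, rfl⟩ : ∃ k, n = 4*k+2 := ⟨n/4, by omega⟩
  have hζ0 : ζ ≠ 0 := by rw [hζ]; exact Complex.exp_ne_zero _
  have hd : ((4*k+2:ℕ):ℂ) ≠ 0 := Nat.cast_ne_zero.mpr (by omega)
  have h2 : ζ ^ (2*k+1) = I := by
    rw [hζ, ← Complex.exp_nat_mul]
    have h0 : ((2*k+1:ℕ):ℂ) ≠ 0 := Nat.cast_ne_zero.mpr (by omega)
    have h42 : ((2*k+1 : ℕ) : ℂ) * (↑Real.pi * I / ((4*k+2 : ℕ):ℂ)) = ↑(Real.pi/2) * I := by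
      rw [show ((4*k+2:ℕ):ℂ) = ((2*k+1:ℕ):ℂ)*2 by push_cast; ring, ← mul_div_assoc,
        mul_div_mul_left _ _ h0]
      push_cast
      ring
    rw [h42, Complex.exp_mul_I]
    simp [← Complex.ofReal_cos, ← Complex.ofReal_sin]
  have hconj : (starRingEnd ℂ) ζ = ζ⁻¹ := by
    rw [hζ, ← Complex.exp_neg, ← Complex.exp_conj]
    congr 1
    simp [map_div₀, Complex.conj_I, map_ofNat]
    ring_nf
  have he1 : (4*k+2+2)/4 = k+1 := by omega
  have he2 : (3*(4*k+2)+2)/4 = 3*k+2 := by omega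
  rw [he1, he2]
  obtain ⟨w, hw⟩ : ∃ w, ζ ^ (k+1) = w := ⟨_, rfl⟩
  have hw0 : w ≠ 0 := hw ▸ pow_ne_zero _ hζ0
  have h3 : ζ ^ (3*k+2) = I * w := by
    rw [← hw, ← h2, ← pow_add]; congr 1; omega
  have hw2 : w^2 = I * ζ := by
    rw [← hw, ← pow_mul, ← h2, show (k+1)*2 = (2*k+1)+1 by omega, pow_succ]
  have hcw : (starRingEnd ℂ) w = w⁻¹ := by
    rw [← hw, map_pow, hconj, inv_pow]
  have key : (1 + ζ + ζ ^ (k+1) + ζ ^ (3*k+2)) *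
      (starRingEnd ℂ) (1 + ζ + ζ ^ (k+1) + ζ ^ (3*k+2)) = 4 + ζ + ζ⁻¹ := by
    rw [hw, h3]
    simp only [map_add, map_mul, map_one, hconj, hcw, Complex.conj_I]
    field_simp
    linear_combination (1+ζ)*(1+I) * hw2 +
      ((1+ζ)*ζ - w*ζ) * Complex.I_sq
  refine ⟨by rw [key, hconj], ?_⟩
  rw [key]
  have hcos : ζ + ζ⁻¹ = 2 * ((Real.cos (Real.pi / ((4*k+2:ℕ):ℝ)) : ℝ) : ℂ) := by
    have harg : (↑Real.pi * I / ((4*k+2:ℕ):ℂ)) = ((Real.pi / ((4*k+2:ℕ):ℝ) : ℝ) : ℂ) * I := by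
      push_cast
      field_simp
    rw [hζ, harg, ← Complex.exp_neg, Complex.ofReal_cos, ← neg_mul, Complex.two_cos]
  linear_combination hcos
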